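/- Let f : ℝ^d → ℝ be L-smooth (gradient L-Lipschitz) and μ-strongly convex with minimizer x*. Fix points x_g ∈ ℝ^d, a step γ > 0, random vector g ∈ ℝ^d (with finite second moment), and set x⁺ = x_g − γg. Then for any u ∈ ℝ^d: E[f(x⁺)] ≤ f(u) − ⟨∇f(x_g), u − x_g⟩ − (μ/2)‖u − x_g‖² − (γ/2)‖∇f(x_g)‖² + (γ/2)‖E[g] − ∇f(x_g)‖² + (Lγ²/2)E[‖g‖²]. -/

import Mathlib

open MeasureTheory RealInnerProductSpace

-- descent lemma
theorem smooth_upper {d : ℕ} (f : EuclideanSpace ℝ (Fin d) → ℝ)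
    (f' : EuclideanSpace ℝ (Fin d) → EuclideanSpace ℝ (Fin d))
    (L : ℝ) (hL : 0 < L)
    (hgrad : ∀ x, HasGradientAt f (f' x) x)
    (hsmooth : ∀ x y, ‖f' x - f' y‖ ≤ L * ‖x - y‖)
    (x y : EuclideanSpace ℝ (Fin d)) :
    f y ≤ f x + ⟪f' x, y - x⟫ + L / 2 * ‖y - x‖ ^ 2 := by
  set v := y - x with hv
  have hcf' : Continuous f' := by
    apply (LipschitzWith.of_dist_le_mul (K := L.toNNReal) ?_).continuous
    intro a b
    simp only [dist_eq_norm]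
    calc ‖f' a - f' b‖ ≤ L * ‖a - b‖ := hsmooth a b
    _ ≤ L.toNNReal * ‖a - b‖ := by
        gcongr; exact Real.le_coe_toNNReal L
  have hline : ∀ t : ℝ, HasDerivAt (fun t : ℝ => f (x + t • v)) ⟪f' (x + t • v), v⟫ t := by
    intro t
    have h1 : HasDerivAt (fun t : ℝ => x + t • v) v t := by
      simpa using ((hasDerivAt_id t).smul_const v).const_add x
    have := ((hgrad (x + t • v)).hasFDerivAt.comp_hasDerivAt t h1)
    simp [HasGradientAt, InnerProductSpace.toDual] at this
    exact this
  have hcont : Continuous fun t : ℝ => ⟪f' (x + t • v), v⟫ := by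
    exact (hcf'.comp (continuous_const.add (continuous_id'.smul continuous_const))).inner continuous_const
  have hFTC : f (x + (1:ℝ) • v) - f (x + (0:ℝ) • v)
      = ∫ t in (0:ℝ)..1, ⟪f' (x + t • v), v⟫ := by
    rw [intervalIntegral.integral_eq_sub_of_hasDerivAt (fun t _ => hline t)
      (hcont.intervalIntegrable 0 1)]
  have hxy : x + (1:ℝ) • v = y := by simp [hv]
  have hx0 : x + (0:ℝ) • v = x := by simp
  rw [hxy, hx0] at hFTC
  have hbound : ∫ t in (0:ℝ)..1, ⟪f' (x + t • v), v⟫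
      ≤ ∫ t in (0:ℝ)..1, (⟪f' x, v⟫ + L * t * ‖v‖ ^ 2) := by
    apply intervalIntegral.integral_mono_on (by norm_num)
      (hcont.intervalIntegrable 0 1) ((continuous_const.add ((continuous_const.mul continuous_id').mul continuous_const)).intervalIntegrable 0 1)
    intro t ht
    have : ⟪f' (x + t • v), v⟫ - ⟪f' x, v⟫ = ⟪f' (x + t • v) - f' x, v⟫ := by
      rw [inner_sub_left]
    have hb : ⟪f' (x + t • v) - f' x, v⟫ ≤ L * t * ‖v‖ ^ 2 := by
      calc ⟪f' (x + t • v) - f' x, v⟫ ≤ ‖f' (x + t • v) - f' x‖ * ‖v‖ :=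
        real_inner_le_norm _ _
      _ ≤ (L * ‖(x + t • v) - x‖) * ‖v‖ := by gcongr; exact hsmooth _ _
      _ = L * (|t| * ‖v‖) * ‖v‖ := by rw [add_sub_cancel_left, norm_smul]; norm_num
      _ = L * t * ‖v‖ ^ 2 := by rw [abs_of_nonneg ht.1]; ring
    show ⟪f' (x + t • v), v⟫ ≤ ⟪f' x, v⟫ + L * t * ‖v‖ ^ 2
    linarith
  have hint : ∫ t in (0:ℝ)..1, (⟪f' x, v⟫ + L * t * ‖v‖ ^ 2)
      = ⟪f' x, v⟫ + L / 2 * ‖v‖ ^ 2 := by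
    rw [intervalIntegral.integral_add (g := fun t : ℝ => L * t * ‖v‖ ^ 2) (continuous_const.intervalIntegrable 0 1)
      (((continuous_const.mul continuous_id').mul continuous_const).intervalIntegrable 0 1)]
    have h1 : (fun t : ℝ => L * t * ‖v‖ ^ 2) = fun t : ℝ => (L * ‖v‖ ^ 2) * t := by
      ext t; ring
    rw [h1, intervalIntegral.integral_const_mul, integral_id, intervalIntegral.integral_const]
    norm_num; ring
  rw [hint] at hbound
  linarith [hFTC ▸ hbound]

theorem descent_lemma_stochastic {d : ℕ} (f : EuclideanSpace ℝ (Fin d) → ℝ)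
    (f' : EuclideanSpace ℝ (Fin d) → EuclideanSpace ℝ (Fin d))
    (L μ' : ℝ) (hL : 0 < L) (hμ : 0 < μ')
    (hgrad : ∀ x, HasGradientAt f (f' x) x)
    (hsmooth : ∀ x y, ‖f' x - f' y‖ ≤ L * ‖x - y‖)
    (hsc : ∀ x y, f y + ⟪f' y, x - y⟫ + μ' / 2 * ‖x - y‖ ^ 2 ≤ f x)
    (xstar : EuclideanSpace ℝ (Fin d)) (hmin : ∀ y, f xstar ≤ f y)
    (xg : EuclideanSpace ℝ (Fin d)) (γ : ℝ) (hγ : 0 < γ)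
    {Ω : Type*} [MeasurableSpace Ω] (P : Measure Ω) [IsProbabilityMeasure P]
    (g : Ω → EuclideanSpace ℝ (Fin d)) (hgint : Integrable g P)
    (hg2int : Integrable (fun ω => ‖g ω‖ ^ 2) P)
    (u : EuclideanSpace ℝ (Fin d)) :
    ∫ ω, f (xg - γ • g ω) ∂P ≤
      f u - ⟪f' xg, u - xg⟫ - μ' / 2 * ‖u - xg‖ ^ 2 - γ / 2 * ‖f' xg‖ ^ 2
        + γ / 2 * ‖(∫ ω, g ω ∂P) - f' xg‖ ^ 2
        + L * γ ^ 2 / 2 * ∫ ω, ‖g ω‖ ^ 2 ∂P := by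
  set m := ∫ ω, g ω ∂P with hm
  have hinner : Integrable (fun ω => ⟪f' xg, g ω⟫) P := by
    have : Integrable (fun ω => (innerSL ℝ (f' xg)) (g ω)) P :=
      (innerSL ℝ (f' xg)).integrable_comp hgint
    simpa using this
  set U : Ω → ℝ := fun ω => f xg - γ * ⟪f' xg, g ω⟫ + L * γ ^ 2 / 2 * ‖g ω‖ ^ 2 with hUdef
  have hU : ∀ ω, f (xg - γ • g ω) ≤ U ω := by
    intro ω
    have h := smooth_upper f f' L hL hgrad hsmooth xg (xg - γ • g ω)
    have h1 : xg - γ • g ω - xg = -(γ • g ω) := by abel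
    rw [h1] at h
    have h2 : ⟪f' xg, -(γ • g ω)⟫ = -(γ * ⟪f' xg, g ω⟫) := by
      rw [inner_neg_right, real_inner_smul_right]
    have h3 : ‖-(γ • g ω)‖ ^ 2 = γ ^ 2 * ‖g ω‖ ^ 2 := by
      rw [norm_neg, norm_smul]
      simp [mul_pow, abs_of_pos hγ, sq_abs]
    rw [h2, h3] at h
    simp only [hUdef]
    linarith
  have hUint : Integrable U P :=
    ((integrable_const (f xg)).sub (hinner.const_mul γ)).add (hg2int.const_mul _)
  have hfcont : Continuous f := by
    rw [continuous_iff_continuousAt]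
    exact fun x => (hgrad x).continuousAt
  have hhint : Integrable (fun ω => f (xg - γ • g ω)) P := by
    apply Integrable.mono' ((integrable_const |f xstar|).add hUint.norm)
    · exact (show Continuous (fun v : EuclideanSpace ℝ (Fin d) => f (xg - γ • v)) from hfcont.comp (continuous_const.sub
        (continuous_id.const_smul γ : Continuous fun v : EuclideanSpace ℝ (Fin d) => γ • v))).comp_aestronglyMeasurable
        hgint.aestronglyMeasurable
    · filter_upwards with ω
      have h1 := hmin (xg - γ • g ω)
      have h2 := hU ω
      simp only [Pi.add_apply]
      rw [Real.norm_eq_abs, abs_le]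
      constructor
      · have : -(|f xstar| + ‖U ω‖) ≤ f xstar := by
          have := neg_abs_le (f xstar); have := norm_nonneg (U ω); linarith
        linarith
      · have : U ω ≤ |f xstar| + ‖U ω‖ := by
          have := le_abs_self (U ω); have := abs_nonneg (f xstar)
          rw [Real.norm_eq_abs]; linarith
        linarith
  have ha : Integrable (fun ω => f xg - γ * ⟪f' xg, g ω⟫) P :=
    (integrable_const (f xg)).sub (hinner.const_mul γ)
  have hb : Integrable (fun ω => L * γ ^ 2 / 2 * ‖g ω‖ ^ 2) P := hg2int.const_mul _
  have hc : Integrable (fun ω => γ * ⟪f' xg, g ω⟫) P := hinner.const_mul γ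
  have hIU : ∫ ω, U ω ∂P = f xg - γ * ⟪f' xg, m⟫ + L * γ ^ 2 / 2 * ∫ ω, ‖g ω‖ ^ 2 ∂P := by
    simp only [hUdef]
    rw [integral_add ha hb, integral_sub (integrable_const (f xg)) hc,
      MeasureTheory.integral_const, integral_const_mul, integral_const_mul, integral_inner hgint]
    simp [hm]
  have step1 : ∫ ω, f (xg - γ • g ω) ∂P ≤ ∫ ω, U ω ∂P := integral_mono hhint hUint hU
  rw [hIU] at step1
  have hsc' := hsc u xg
  have hquad : -(γ * ⟪f' xg, m⟫) ≤ γ / 2 * ‖m - f' xg‖ ^ 2 - γ / 2 * ‖f' xg‖ ^ 2 := by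
    have hns : ‖m - f' xg‖ ^ 2 = ‖m‖ ^ 2 - 2 * ⟪m, f' xg⟫ + ‖f' xg‖ ^ 2 := by
      rw [norm_sub_sq_real]
    have hcomm : ⟪m, f' xg⟫ = ⟪f' xg, m⟫ := real_inner_comm _ _
    have hpos : 0 ≤ γ / 2 * ‖m‖ ^ 2 := by positivity
    rw [hns, hcomm]; ring_nf; ring_nf at hpos ⊢; nlinarith
  linarith
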